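/- arXiv:2005.12244 — 5 statements merged into one kernel-verified Lean document; each statement's English description precedes it below -/
import Mathlib

section
/- Let k be even and let G be a k-uniform hyperchain on n nodes (hyperedges e_j = {j, j+1, …, j+k−1} for j = 1,…,n−k+1) with adjacency tensor A. If only m = k−2 nodes receive inputs (i.e., B consists of k−2 distinct scaled standard basis vectors), then the controllability subspace 𝒞(A,B) has dimension k−2 < n; hence G is not controllable with k−2 control nodes. -/
noncomputable section
open Classical

/-- Prepend `j` to the index tuple `js`. -/
def consIdx {n k : ℕ} (j : Fin n) (js : Fin (k - 1) → Fin n) : Fin k → Fin n :=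
  fun t => if h : (t : ℕ) = 0 then j
    else js ⟨(t : ℕ) - 1, by have := t.isLt; omega⟩

/-- Adjacency tensor of a `k`-uniform hypergraph with hyperedge set `E`. -/
def adjT (n k : ℕ) (E : Finset (Finset (Fin n))) : (Fin k → Fin n) → ℝ :=
  fun j => if Function.Injective j ∧ Finset.image j Finset.univ ∈ E
    then ((Nat.factorial (k - 1) : ℝ))⁻¹ else 0

/-- Contraction of a `k`-th order tensor along `k−1` modes with vectors `v`. -/
def tcontract {n k : ℕ} (A : (Fin k → Fin n) → ℝ) (v : Fin (k - 1) → (Fin n → ℝ)) :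
    Fin n → ℝ :=
  fun j => ∑ js : Fin (k - 1) → Fin n, A (consIdx j js) * ∏ i, v i (js i)

/-- The controllability subspace `𝒞(A,B)`: the smallest subspace of `ℝⁿ` containing the
set `Bc` of input columns and closed under the contraction map `v₁,…,v_{k−1} ↦ A v₁ ⋯ v_{k−1}`. -/
def ctrlSpace {n k : ℕ} (A : (Fin k → Fin n) → ℝ) (Bc : Set (Fin n → ℝ)) :
    Submodule ℝ (Fin n → ℝ) :=
  sInf {W : Submodule ℝ (Fin n → ℝ) | Bc ⊆ ↑W ∧
    ∀ v : Fin (k - 1) → (Fin n → ℝ), (∀ i, v i ∈ W) → tcontract A v ∈ W}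

/-- The hyperedge `{l, l+1, …, l+k−1}` of a `k`-uniform hyperchain. -/
def chainEdge (n k l : ℕ) : Finset (Fin n) :=
  Finset.univ.filter (fun i => l ≤ (i : ℕ) ∧ (i : ℕ) < l + k)

/-- The hyperedge set of the `k`-uniform hyperchain on `n` nodes. -/
def chainE (n k : ℕ) : Finset (Finset (Fin n)) :=
  (Finset.range (n - k + 1)).image (chainEdge n k)

/-- Adjacency tensor of the complete `k`-uniform hypergraph on `n` nodes. -/
def completeT (n k : ℕ) : (Fin k → Fin n) → ℝ :=
  fun j => if Function.Injective j then ((Nat.factorial (k - 1) : ℝ))⁻¹ else 0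

/-- For even `k`, a `k`-uniform hyperchain on `n` nodes is not controllable with
`k−2` control nodes: the controllability subspace generated by `k−2` scaled standard
basis vectors has dimension `k−2 < n`. -/
theorem stmt8 {n k : ℕ} (hkeven : Even k) (hk : 2 ≤ k) (hkn : k ≤ n)
    (S : Finset (Fin n)) (hcard : S.card = k - 2)
    (c : Fin n → ℝ) (hc : ∀ s ∈ S, c s ≠ 0) :
    Module.finrank ℝ
        (ctrlSpace (adjT n k (chainE n k)) {x | ∃ s ∈ S, x = c s • (Pi.single s 1 : Fin n → ℝ)})
        = k - 2
      ∧ ctrlSpace (adjT n k (chainE n k)) {x | ∃ s ∈ S, x = c s • (Pi.single s 1 : Fin n → ℝ)} ≠ ⊤ := by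
  classical
  set A := adjT n k (chainE n k) with hA
  set Bc : Set (Fin n → ℝ) := {x | ∃ s ∈ S, x = c s • (Pi.single s 1 : Fin n → ℝ)} with hBc
  set W : Submodule ℝ (Fin n → ℝ) :=
    Submodule.span ℝ ((fun s => (Pi.single s 1 : Fin n → ℝ)) '' ↑S) with hW
  -- elements of W vanish off S
  have hsupp : ∀ x ∈ W, ∀ i : Fin n, i ∉ S → x i = 0 := by
    intro x hx
    refine Submodule.span_induction ?_ ?_ ?_ ?_ hx
    · rintro y ⟨s, hs, rfl⟩ i hi
      have : i ≠ s := fun h => hi (h ▸ hs)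
      simp [Pi.single_apply, this]
    · intro i _; simp
    · intro y z _ _ hy hz i hi
      simp [hy i hi, hz i hi]
    · intro a y _ hy i hi
      simp [hy i hi]
  -- W is closed under contraction: the contraction of vectors in W is 0
  have hclosed : ∀ v : Fin (k - 1) → (Fin n → ℝ), (∀ i, v i ∈ W) → tcontract A v ∈ W := by
    intro v hv
    have hzero : tcontract A v = 0 := by
      funext j
      show (∑ js : Fin (k - 1) → Fin n, A (consIdx j js) * ∏ i, v i (js i)) = 0
      refine Finset.sum_eq_zero fun js _ => ?_
      by_cases hall : ∀ i, js i ∈ S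
      · -- pigeonhole: js cannot be injective, so A vanishes
        have hlt : S.card < (Finset.univ : Finset (Fin (k - 1))).card := by
          simp [hcard]; omega
        obtain ⟨i, _, i', _, hne, heq⟩ :=
          Finset.exists_ne_map_eq_of_card_lt_of_maps_to hlt (fun i _ => hall i)
        have hninj : ¬ Function.Injective (consIdx j js) := by
          intro hinj
          have h1 : (i : ℕ) + 1 < k := by have := i.isLt; omega
          have h2 : (i' : ℕ) + 1 < k := by have := i'.isLt; omega
          have e1 : consIdx j js ⟨(i : ℕ) + 1, h1⟩ = js i := by
            simp [consIdx]
          have e2 : consIdx j js ⟨(i' : ℕ) + 1, h2⟩ = js i' := by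
            simp [consIdx]
          have hmk : (⟨(i : ℕ) + 1, h1⟩ : Fin k) = ⟨(i' : ℕ) + 1, h2⟩ :=
            hinj (by rw [e1, e2, heq])
          apply hne
          simp only [Fin.mk.injEq] at hmk
          exact Fin.ext (by omega)
        have : A (consIdx j js) = 0 := by
          rw [hA]
          unfold adjT
          rw [if_neg (fun h => hninj h.1)]
        simp [this]
      · push_neg at hall
        obtain ⟨i, hi⟩ := hall
        have : v i (js i) = 0 := hsupp (v i) (hv i) (js i) hi
        rw [Finset.prod_eq_zero (Finset.mem_univ i) this, mul_zero]
    rw [hzero]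
    exact W.zero_mem
  have hBsub : Bc ⊆ ↑W := by
    rintro x ⟨s, hs, rfl⟩
    exact W.smul_mem _ (Submodule.subset_span ⟨s, hs, rfl⟩)
  -- ctrlSpace = W
  have hle : ctrlSpace A Bc ≤ W := sInf_le ⟨hBsub, hclosed⟩
  have hge : W ≤ ctrlSpace A Bc := by
    rw [hW, Submodule.span_le]
    rintro x ⟨s, hs, rfl⟩
    have hmem : c s • (Pi.single s 1 : Fin n → ℝ) ∈ ctrlSpace A Bc :=
      Submodule.mem_sInf.2 fun W' hW' => hW'.1 ⟨s, hs, rfl⟩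
    have := (ctrlSpace A Bc).smul_mem (c s)⁻¹ hmem
    rwa [smul_smul, inv_mul_cancel₀ (hc s hs), one_smul] at this
  have heq : ctrlSpace A Bc = W := le_antisymm hle hge
  -- finrank of W
  have hinj : Function.Injective fun s : Fin n => (Pi.single s 1 : Fin n → ℝ) := by
    intro a b h
    by_contra hab
    have := congrFun h a
    simp [Pi.single_apply, hab] at this
  have hli : LinearIndependent ℝ fun s : ↥S => (Pi.single (s : Fin n) 1 : Fin n → ℝ) := by
    have hb := (Pi.basisFun ℝ (Fin n)).linearIndependent
    have : (fun s : ↥S => (Pi.single (s : Fin n) 1 : Fin n → ℝ)) =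
        (Pi.basisFun ℝ (Fin n)) ∘ (Subtype.val : ↥S → Fin n) := by
      funext s; simp [Pi.basisFun_apply]
    rw [this]
    exact hb.comp _ Subtype.val_injective
  have hrange : Set.range (fun s : ↥S => (Pi.single (s : Fin n) 1 : Fin n → ℝ)) =
      (fun s => (Pi.single s 1 : Fin n → ℝ)) '' ↑S := by
    rw [Set.image_eq_range]
    rfl
  have hfr : Module.finrank ℝ W = k - 2 := by
    rw [hW, ← hrange, finrank_span_eq_card hli, Fintype.card_coe, hcard]
  constructor
  · rw [heq, hfr]
  · rw [heq]
    intro htop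
    have : Module.finrank ℝ W = n := by
      rw [htop]
      simp [finrank_top, Module.finrank_pi]
    omega
end
end

section
/- Let k ≥ 2 and let G be the k-uniform hyperchain on n nodes with adjacency tensor A. Let b_j = e_j (the j-th standard basis vector) for j = 1,…,k−1, and define recursively b_j = A b_{j−k+1} b_{j−k+2} ⋯ b_{j−1} for j = k, …, n. Then each b_j is a nonzero multiple of a vector whose j-th coordinate is nonzero and whose coordinates with index > j vanish; consequently the matrix [b₁ b₂ ⋯ b_n] is upper triangular with nonzero diagonal, hence invertible, and the controllability subspace 𝒞(A, [e₁ ⋯ e_{k−1}]) = ℝⁿ. -/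
noncomputable section
open Classical

lemma inj_le_id {m : ℕ} (σ : Fin m → Fin m) (hinj : Function.Injective σ)
    (hle : ∀ i, (σ i : ℕ) ≤ (i : ℕ)) : ∀ i, σ i = i := by
  have H : ∀ N : ℕ, ∀ i : Fin m, (i : ℕ) ≤ N → σ i = i := by
    intro N
    induction N with
    | zero => intro i hi; have := hle i; exact Fin.ext (by omega)
    | succ N ih =>
      intro i hi
      rcases Nat.lt_or_ge ((σ i : ℕ)) (i : ℕ) with h2 | h2
      · exfalso
        have h3 : σ (σ i) = σ i := ih (σ i) (by omega)
        have h4 : ((σ i : Fin m) : ℕ) = (i : ℕ) := congrArg Fin.val (hinj h3)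
        omega
      · exact Fin.ext (by have := hle i; omega)
  intro i; exact H i i le_rfl

lemma mem_chainEdge' {n k l : ℕ} (x : Fin n) :
    x ∈ chainEdge n k l ↔ l ≤ (x : ℕ) ∧ (x : ℕ) < l + k := by
  simp [chainEdge]

lemma mem_image_consIdx {n k : ℕ} (hk : 0 < k) (m : Fin n) (js : Fin (k - 1) → Fin n)
    (x : Fin n) :
    x ∈ Finset.image (consIdx m js) Finset.univ ↔ (x = m ∨ ∃ i, js i = x) := by
  rw [Finset.mem_image]
  constructor
  · rintro ⟨t, -, rfl⟩
    by_cases h : (t : ℕ) = 0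
    · left; simp [consIdx, h]
    · right
      refine ⟨⟨(t : ℕ) - 1, by have := t.isLt; omega⟩, ?_⟩
      simp [consIdx, h]
  · rintro (rfl | ⟨i, rfl⟩)
    · exact ⟨⟨0, hk⟩, Finset.mem_univ _, by simp [consIdx]⟩
    · exact ⟨⟨(i : ℕ) + 1, by have := i.isLt; omega⟩, Finset.mem_univ _, by simp [consIdx]⟩

lemma consIdx_succ {n k : ℕ} (j : Fin n) (js : Fin (k - 1) → Fin n) (i : Fin (k - 1)) :
    consIdx j js ⟨(i : ℕ) + 1, by have := i.isLt; omega⟩ = js i := by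
  simp [consIdx]

/-- Prop 2 (sufficiency): for the `k`-uniform hyperchain on `n` nodes, setting
`b_j = e_j` for `j < k−1` and `b_j = A b_{j−k+1} ⋯ b_{j−1}` recursively, each `b_j`
has nonzero `j`-th coordinate and vanishing coordinates above `j`; hence the matrix
`[b₁ ⋯ b_n]` is upper triangular with nonzero diagonal, hence invertible, and
controlling the first `k−1` nodes yields `𝒞(A,B) = ℝⁿ`. -/
theorem stmt9 {n k : ℕ} (hk : 2 ≤ k) (hkn : k ≤ n)
    (b : Fin n → (Fin n → ℝ))
    (hbase : ∀ j : Fin n, (j : ℕ) < k - 1 → b j = Pi.single j 1)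
    (hrec : ∀ j : Fin n, ∀ hj : k - 1 ≤ (j : ℕ), b j =
      tcontract (adjT n k (chainE n k))
        (fun i : Fin (k - 1) =>
          b ⟨(j : ℕ) - (k - 1) + (i : ℕ), by have := i.isLt; have := j.isLt; omega⟩)) :
    (∀ j : Fin n, b j j ≠ 0 ∧ ∀ i : Fin n, j < i → b j i = 0)
      ∧ IsUnit (Matrix.of (fun i j : Fin n => b j i))
      ∧ ctrlSpace (adjT n k (chainE n k))
          {x | ∃ j : Fin n, (j : ℕ) < k - 1 ∧ x = (Pi.single j 1 : Fin n → ℝ)} = ⊤ := by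
  have hk0 : 0 < k := by omega
  -- ===== Part 1 =====
  have main : ∀ j : Fin n, b j j ≠ 0 ∧ ∀ i : Fin n, j < i → b j i = 0 := by
    have H : ∀ N : ℕ, ∀ j : Fin n, (j : ℕ) < N →
        (b j j ≠ 0 ∧ ∀ i : Fin n, j < i → b j i = 0) := by
      intro N
      induction N with
      | zero => intro j hj; omega
      | succ N ih =>
        intro j hj
        by_cases hcase : (j : ℕ) < k - 1
        · rw [hbase j hcase]
          refine ⟨by simp, fun i hij => Pi.single_eq_of_ne (ne_of_gt hij) 1⟩
        · push_neg at hcase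
          have ihlt : ∀ x : Fin n, (x : ℕ) < (j : ℕ) →
              (b x x ≠ 0 ∧ ∀ i : Fin n, x < i → b x i = 0) := fun x hx => ih x (by omega)
          have hzero : ∀ x y : Fin n, (x : ℕ) < (j : ℕ) → (x : ℕ) < (y : ℕ) → b x y = 0 :=
            fun x y hx hxy => (ihlt x hx).2 y (by exact hxy)
          -- the canonical index tuple
          set c : Fin (k - 1) → Fin n := fun i =>
            (⟨(j : ℕ) - (k - 1) + (i : ℕ), by have := i.isLt; have := j.isLt; omega⟩ : Fin n)
            with hc
          have hci : ∀ i : Fin (k - 1), ((c i) : ℕ) = (j : ℕ) - (k - 1) + (i : ℕ) :=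
            fun i => rfl
          -- key: any nonvanishing term with coordinate m ≥ j forces m = j and js = c
          have key : ∀ m : Fin n, (j : ℕ) ≤ (m : ℕ) → ∀ js : Fin (k - 1) → Fin n,
              adjT n k (chainE n k) (consIdx m js) * (∏ i, b (c i) (js i)) ≠ 0 →
              m = j ∧ js = c := by
            intro m hm js hterm
            have hAne : adjT n k (chainE n k) (consIdx m js) ≠ 0 :=
              fun h => hterm (by rw [h, zero_mul])
            have hfac : ∀ i : Fin (k - 1), b (c i) (js i) ≠ 0 := by
              intro i h0
              exact hterm (by rw [Finset.prod_eq_zero (Finset.mem_univ i) h0, mul_zero])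
            have hjsle : ∀ i : Fin (k - 1), (js i : ℕ) ≤ (j : ℕ) - (k - 1) + (i : ℕ) := by
              intro i
              by_contra hgt
              push_neg at hgt
              exact hfac i (hzero (c i) (js i)
                (by have := hci i; have := i.isLt; omega)
                (by have := hci i; omega))
            rw [adjT] at hAne
            split_ifs at hAne with hcond
            swap
            · exact absurd rfl hAne
            obtain ⟨hinj, hmem⟩ := hcond
            rw [chainE, Finset.mem_image] at hmem
            obtain ⟨l, hl, hedge⟩ := hmem
            rw [Finset.mem_range] at hl
            have hmemiff : ∀ x : Fin n, (l ≤ (x : ℕ) ∧ (x : ℕ) < l + k) ↔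
                (x = m ∨ ∃ i, js i = x) := by
              intro x
              rw [← mem_chainEdge' x, hedge, mem_image_consIdx hk0]
            have hm_mem : l ≤ (m : ℕ) ∧ (m : ℕ) < l + k := (hmemiff m).2 (Or.inl rfl)
            have hjs_mem : ∀ i, l ≤ (js i : ℕ) ∧ (js i : ℕ) < l + k :=
              fun i => (hmemiff (js i)).2 (Or.inr ⟨i, rfl⟩)
            -- m = j
            have hmj : (m : ℕ) = (j : ℕ) := by
              by_contra hne
              have hmgt : (j : ℕ) < (m : ℕ) := by omega
              rcases Nat.eq_or_lt_of_le hm_mem.1 with hml | hml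
              · have h1 := (hjs_mem ⟨0, by omega⟩).1
                have h2 := hjsle ⟨0, by omega⟩
                omega
              · set x : Fin n := ⟨(m : ℕ) - 1, by have := m.isLt; omega⟩ with hxd
                have hxv : (x : ℕ) = (m : ℕ) - 1 := rfl
                have hx := (hmemiff x).1 ⟨by omega, by omega⟩
                rcases hx with h | ⟨i, h⟩
                · have hv : (x : ℕ) = (m : ℕ) := congrArg Fin.val h
                  omega
                · have hv : (js i : ℕ) = (x : ℕ) := congrArg Fin.val h
                  have := hjsle i
                  have := i.isLt
                  omega
            -- l = j - (k - 1)
            have hl2 : l = (j : ℕ) - (k - 1) := by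
              by_contra hne
              have hgt : (j : ℕ) - (k - 1) < l := by omega
              have hjn : (j : ℕ) + 1 < n := by omega
              set x : Fin n := ⟨(j : ℕ) + 1, hjn⟩ with hxd
              have hxv : (x : ℕ) = (j : ℕ) + 1 := rfl
              have hx := (hmemiff x).1 ⟨by omega, by omega⟩
              rcases hx with h | ⟨i, h⟩
              · have hv : (x : ℕ) = (m : ℕ) := congrArg Fin.val h
                omega
              · have hv : (js i : ℕ) = (x : ℕ) := congrArg Fin.val h
                have := hjsle i
                have := i.isLt
                omega
            -- js = c
            have hjsinj : Function.Injective js := by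
              intro a a' hEq
              have h1 : consIdx m js ⟨(a : ℕ) + 1, by have := a.isLt; omega⟩ =
                  consIdx m js ⟨(a' : ℕ) + 1, by have := a'.isLt; omega⟩ := by
                rw [consIdx_succ, consIdx_succ, hEq]
              have h2 : (a : ℕ) + 1 = (a' : ℕ) + 1 := congrArg Fin.val (hinj h1)
              exact Fin.ext (by omega)
            have hσ := inj_le_id
              (fun i : Fin (k - 1) => (⟨(js i : ℕ) - l,
                by have := hjsle i; have := (hjs_mem i).1; have := i.isLt; omega⟩ : Fin (k - 1)))
              (fun a a' h => by
                have hv : (js a : ℕ) - l = (js a' : ℕ) - l := congrArg Fin.val h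
                exact hjsinj (Fin.ext (by have := (hjs_mem a).1; have := (hjs_mem a').1; omega)))
              (fun i => by have := hjsle i; have hli := (hjs_mem i).1; show (js i : ℕ) - l ≤ _; omega)
            refine ⟨Fin.ext hmj, funext fun i => ?_⟩
            have hv : (js i : ℕ) - l = (i : ℕ) := congrArg Fin.val (hσ i)
            exact Fin.ext (by have := hci i; have := (hjs_mem i).1; omega)
          constructor
          · -- diagonal entry nonzero
            rw [hrec j hcase]
            show (∑ js : Fin (k - 1) → Fin n,
              adjT n k (chainE n k) (consIdx j js) * ∏ i, b (c i) (js i)) ≠ 0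
            rw [Finset.sum_eq_single c]
            · -- the single term is nonzero
              apply mul_ne_zero
              · rw [adjT, if_pos]
                · exact inv_ne_zero (Nat.cast_ne_zero.2 (Nat.factorial_ne_zero _))
                constructor
                · -- injectivity of consIdx j c
                  have hval : ∀ t : Fin k, (consIdx j c t : ℕ) =
                      if (t : ℕ) = 0 then (j : ℕ) else (j : ℕ) - (k - 1) + ((t : ℕ) - 1) := by
                    intro t
                    simp only [consIdx]
                    split_ifs with h
                    · rfl
                    · rfl
                  intro t t' hEq
                  have hv := congrArg Fin.val hEq
                  rw [hval, hval] at hv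
                  have ht := t.isLt
                  have ht' := t'.isLt
                  split_ifs at hv <;> exact Fin.ext (by omega)
                · -- image is a chain edge
                  rw [chainE, Finset.mem_image]
                  refine ⟨(j : ℕ) - (k - 1), Finset.mem_range.2 (by have := j.isLt; omega), ?_⟩
                  ext x
                  rw [mem_chainEdge', mem_image_consIdx hk0]
                  constructor
                  · rintro ⟨h1, h2⟩
                    by_cases hxj : (x : ℕ) = (j : ℕ)
                    · exact Or.inl (Fin.ext hxj)
                    · refine Or.inr ⟨⟨(x : ℕ) - ((j : ℕ) - (k - 1)), by omega⟩, Fin.ext ?_⟩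
                      show (j : ℕ) - (k - 1) + ((x : ℕ) - ((j : ℕ) - (k - 1))) = (x : ℕ)
                      omega
                  · rintro (rfl | ⟨i, rfl⟩)
                    · exact ⟨by omega, by omega⟩
                    · have := i.isLt
                      exact ⟨by show _ ≤ (j:ℕ) - (k-1) + (i:ℕ); omega,
                        by show (j:ℕ) - (k-1) + (i:ℕ) < _; omega⟩
              · rw [Finset.prod_ne_zero_iff]
                intro i _
                exact (ihlt (c i) (by have := hci i; have := i.isLt; omega)).1
            · intro js _ hne
              by_contra h0
              exact hne (key j le_rfl js h0).2
            · intro h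
              exact absurd (Finset.mem_univ c) h
          · -- entries above j vanish
            intro i hij
            rw [hrec j hcase]
            show (∑ js : Fin (k - 1) → Fin n,
              adjT n k (chainE n k) (consIdx i js) * ∏ t, b (c t) (js t)) = 0
            apply Finset.sum_eq_zero
            intro js _
            by_contra h0
            have hji : (j : ℕ) < (i : ℕ) := hij
            have := congrArg Fin.val (key i (le_of_lt hji) js h0).1
            omega
    intro j
    exact H ((j : ℕ) + 1) j (by omega)
  have hdetu : IsUnit (Matrix.of (fun i j : Fin n => b j i)).det := by
    have hdet : (Matrix.of (fun i j : Fin n => b j i)).det =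
        ∏ i : Fin n, b i i := by
      rw [Matrix.det_of_upperTriangular (by intro i j hij; exact (main j).2 i hij)]
      rfl
    rw [hdet, isUnit_iff_ne_zero, Finset.prod_ne_zero_iff]
    exact fun i _ => (main i).1
  refine ⟨main, (Matrix.isUnit_iff_isUnit_det _).2 hdetu, ?_⟩
  -- ===== Part 3 =====
  set M : Matrix (Fin n) (Fin n) ℝ := Matrix.of (fun i j : Fin n => b j i) with hMdef
  apply le_antisymm le_top
  apply le_sInf
  rintro W ⟨hW1, hW2⟩
  have hbW : ∀ j : Fin n, b j ∈ W := by
    have H : ∀ N : ℕ, ∀ j : Fin n, (j : ℕ) < N → b j ∈ W := by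
      intro N
      induction N with
      | zero => intro j hj; omega
      | succ N ih =>
        intro j hj
        by_cases hc : (j : ℕ) < k - 1
        · rw [hbase j hc]
          exact hW1 ⟨j, hc, rfl⟩
        · push_neg at hc
          rw [hrec j hc]
          exact hW2 _ (fun i => ih _
            (by show (j : ℕ) - (k - 1) + (i : ℕ) < N; have := i.isLt; omega))
    intro j; exact H ((j : ℕ) + 1) j (by omega)
  intro x _
  have hinv : M.mulVec ((M⁻¹).mulVec x) = x := by
    rw [Matrix.mulVec_mulVec, Matrix.mul_nonsing_inv _ hdetu, Matrix.one_mulVec]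
  have hx : x = ∑ jj : Fin n, ((M⁻¹).mulVec x) jj • b jj := by
    funext i
    conv_lhs => rw [← hinv]
    rw [Finset.sum_apply]
    show ∑ jj, M i jj * ((M⁻¹).mulVec x) jj = _
    refine Finset.sum_congr rfl fun jj _ => ?_
    show b jj i * ((M⁻¹).mulVec x) jj = ((M⁻¹).mulVec x) jj • b jj i
    rw [smul_eq_mul, mul_comm]
  rw [hx]
  exact Submodule.sum_mem _ (fun jj _ => Submodule.smul_mem _ _ (hbW jj))
end
end

section
/- Let k be even and G be the complete k-uniform hypergraph on n > k nodes with adjacency tensor A. If the input matrix B consists of the standard basis vectors e₁,…,e_{n−2}, then every vector in the controllability subspace 𝒞(A,B) has its last two coordinates equal; hence dim 𝒞(A,B) ≤ n−1 and G is not controllable with n−2 control nodes. -/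
noncomputable section
open Classical

lemma completeT_comp {n k : ℕ} (σ : Equiv.Perm (Fin n)) (j : Fin k → Fin n) :
    completeT n k (σ ∘ j) = completeT n k j := by
  unfold completeT
  congr 1
  simp only [eq_iff_iff]
  constructor
  · intro h; exact Function.Injective.of_comp h
  · intro h; exact σ.injective.comp h

lemma swap_tcontract {n k : ℕ} (a b : Fin n)
    (v : Fin (k - 1) → (Fin n → ℝ)) (hv : ∀ i, v i a = v i b) :
    tcontract (completeT n k) v a = tcontract (completeT n k) v b := by
  classical
  set σ := Equiv.swap a b
  have hvσ : ∀ i j, v i (σ j) = v i j := by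
    intro i j
    rcases eq_or_ne j a with rfl | hja
    · simp [σ, Equiv.swap_apply_left, hv i]
    rcases eq_or_ne j b with rfl | hjb
    · simp [σ, Equiv.swap_apply_right, (hv i).symm]
    · simp [σ, Equiv.swap_apply_of_ne_of_ne hja hjb]
  unfold tcontract
  refine Fintype.sum_equiv (Equiv.arrowCongr (Equiv.refl (Fin (k-1))) σ) _ _ ?_
  intro js
  have hcons : consIdx b (fun i => σ (js i)) = σ ∘ consIdx a js := by
    funext t
    unfold consIdx
    by_cases h : (t : ℕ) = 0 <;> simp [h, σ, Equiv.swap_apply_left]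
  show completeT n k (consIdx a js) * ∏ i, v i (js i)
      = completeT n k (consIdx b (fun i => σ (js i))) * ∏ x, v x (σ (js x))
  rw [hcons, completeT_comp]
  congr 1
  exact (Finset.prod_congr rfl fun i _ => hvσ i (js i)).symm

/-- For even `k`, the complete `k`-uniform hypergraph on `n > k` nodes is not controllable
with the `n−2` control nodes `1,…,n−2`: every vector in `𝒞(A,B)` has equal last two
coordinates, so `dim 𝒞(A,B) ≤ n−1` and `𝒞(A,B) ≠ ⊤`. -/
theorem stmt11 {n k : ℕ} (hkeven : Even k) (hk : 2 ≤ k) (hkn : k < n) :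
    (∀ x ∈ ctrlSpace (completeT n k)
        {x | ∃ i : Fin n, (i : ℕ) < n - 2 ∧ x = (Pi.single i 1 : Fin n → ℝ)},
      x ⟨n - 2, by omega⟩ = x ⟨n - 1, by omega⟩)
    ∧ Module.finrank ℝ (ctrlSpace (completeT n k)
        {x | ∃ i : Fin n, (i : ℕ) < n - 2 ∧ x = (Pi.single i 1 : Fin n → ℝ)}) ≤ n - 1
    ∧ ctrlSpace (completeT n k)
        {x | ∃ i : Fin n, (i : ℕ) < n - 2 ∧ x = (Pi.single i 1 : Fin n → ℝ)} ≠ ⊤ := by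
  have hn : 3 ≤ n := by omega
  set a : Fin n := ⟨n - 2, by omega⟩ with ha
  set b : Fin n := ⟨n - 1, by omega⟩ with hb
  have hab : a ≠ b := Fin.ne_of_val_ne (by simp [ha, hb]; omega)
  set W : Submodule ℝ (Fin n → ℝ) :=
    LinearMap.ker ((LinearMap.proj a : (Fin n → ℝ) →ₗ[ℝ] ℝ) - LinearMap.proj b) with hW
  have hmemW : ∀ x : Fin n → ℝ, x ∈ W ↔ x a = x b := by
    intro x
    simp [hW, LinearMap.mem_ker, sub_eq_zero]
  have hle : ctrlSpace (completeT n k)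
      {x | ∃ i : Fin n, (i : ℕ) < n - 2 ∧ x = (Pi.single i 1 : Fin n → ℝ)} ≤ W := by
    apply sInf_le
    refine ⟨?_, ?_⟩
    · rintro x ⟨i, hi, rfl⟩
      rw [SetLike.mem_coe, hmemW]
      rw [Pi.single_eq_of_ne (Fin.ne_of_val_ne (show (a:ℕ) ≠ i by simp [ha]; omega)),
        Pi.single_eq_of_ne (Fin.ne_of_val_ne (show (b:ℕ) ≠ i by simp [hb]; omega))]
    · intro v hv
      rw [hmemW]
      exact swap_tcontract a b v fun i => (hmemW _).mp (hv i)
  have hsW : Pi.single a (1:ℝ) ∉ W := by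
    rw [hmemW]
    simp [Pi.single_eq_same, Pi.single_eq_of_ne hab.symm]
  have hWne : W ≠ ⊤ := fun h => hsW (h ▸ Submodule.mem_top)
  refine ⟨fun x hx => (hmemW x).mp (hle hx), ?_, ?_⟩
  · have h1 : Module.finrank ℝ W < Module.finrank ℝ (Fin n → ℝ) :=
      Submodule.finrank_lt hWne
    have h2 : Module.finrank ℝ (Fin n → ℝ) = n := Module.finrank_fin_fun ℝ
    have h3 := Submodule.finrank_mono hle
    omega
  · intro h
    exact hWne (top_le_iff.mp (h ▸ hle))
end
end

section
/- Let G be the complete k-uniform hypergraph on n ≥ k+1 nodes with adjacency tensor A, and let B = [e₁ ⋯ e_{n−1}]. Then the contraction A e_{j₁} e_{j₂} ⋯ e_{j_{k−1}} for any k−1 distinct indices j₁,…,j_{k−1} ∈ {1,…,n−1} has nonzero n-th coordinate; consequently 𝒞(A,B) = ℝⁿ, so controlling n−1 nodes suffices to control G. -/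
noncomputable section
open Classical

lemma tcontract_single {n k : ℕ} (A : (Fin k → Fin n) → ℝ) (js₀ : Fin (k-1) → Fin n)
    (j : Fin n) :
    tcontract A (fun i => (Pi.single (js₀ i) 1 : Fin n → ℝ)) j = A (consIdx j js₀) := by
  unfold tcontract
  rw [Fintype.sum_eq_single js₀]
  · simp
  · intro js hjs
    obtain ⟨i, hi⟩ := Function.ne_iff.mp hjs
    have : ∏ i, (Pi.single (js₀ i) 1 : Fin n → ℝ) (js i) = 0 :=
      Finset.prod_eq_zero (Finset.mem_univ i) (by simp [Pi.single_apply, hi])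
    rw [this, mul_zero]

lemma consIdx_inj {n k : ℕ} (j : Fin n) (js : Fin (k-1) → Fin n)
    (hinj : Function.Injective js) (hj : ∀ i, js i ≠ j) :
    Function.Injective (consIdx j js) := by
  intro a b hab
  simp only [consIdx] at hab
  split_ifs at hab with h1 h2 h2
  · exact Fin.ext (by omega)
  · exact absurd hab.symm (hj _)
  · exact absurd hab (hj _)
  · have := hinj hab
    have := Fin.mk.inj_iff.mp this
    exact Fin.ext (by omega)

lemma consIdx_not_inj {n k : ℕ} (hk : 2 ≤ k) (j : Fin n) (js : Fin (k-1) → Fin n)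
    (i : Fin (k-1)) (hij : js i = j) :
    ¬ Function.Injective (consIdx j js) := by
  intro h
  have e0 : consIdx j js ⟨0, by omega⟩ = j := by simp [consIdx]
  have e1 : consIdx j js ⟨(i:ℕ)+1, by have := i.isLt; omega⟩ = js i := by
    simp only [consIdx]
    rw [dif_neg (by omega)]
    congr 1
  have := h (e0.trans (hij.symm.trans e1.symm))
  simp [Fin.ext_iff] at this

/-- For the complete `k`-uniform hypergraph on `n ≥ k+1` nodes with inputs at nodes
`1,…,n−1`: the contraction of the adjacency tensor with `k−1` distinct standard basis
vectors indexed in `{1,…,n−1}` has nonzero `n`-th coordinate, and `𝒞(A,B) = ℝⁿ`. -/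
theorem stmt12 {n k : ℕ} (hk : 2 ≤ k) (hkn : k + 1 ≤ n) :
    (∀ js : Fin (k - 1) → Fin n, Function.Injective js → (∀ i, ((js i : ℕ)) < n - 1) →
      tcontract (completeT n k) (fun i => (Pi.single (js i) 1 : Fin n → ℝ))
        ⟨n - 1, by omega⟩ ≠ 0)
    ∧ ctrlSpace (completeT n k)
        {x | ∃ i : Fin n, (i : ℕ) < n - 1 ∧ x = (Pi.single i 1 : Fin n → ℝ)} = ⊤ := by
  have hc : ((Nat.factorial (k-1) : ℝ)) ≠ 0 := by
    exact_mod_cast Nat.factorial_ne_zero _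
  constructor
  · intro js hinj hlt
    rw [tcontract_single]
    have hInj : Function.Injective (consIdx (⟨n-1, by omega⟩ : Fin n) js) :=
      consIdx_inj _ _ hinj (fun i h => by
        have := congrArg Fin.val h
        simp only at this
        have := hlt i
        omega)
    simp only [completeT, if_pos hInj]
    exact inv_ne_zero hc
  · set Bc : Set (Fin n → ℝ) :=
      {x | ∃ i : Fin n, (i : ℕ) < n - 1 ∧ x = (Pi.single i 1 : Fin n → ℝ)} with hBc
    set W := ctrlSpace (completeT n k) Bc with hW
    have hBW : ∀ x ∈ Bc, x ∈ W := fun x hx =>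
      Submodule.mem_sInf.mpr (fun p hp => hp.1 hx)
    have hclosed : ∀ v : Fin (k-1) → (Fin n → ℝ), (∀ i, v i ∈ W) →
        tcontract (completeT n k) v ∈ W := by
      intro v hv
      refine Submodule.mem_sInf.mpr (fun p hp => hp.2 v (fun i => ?_))
      exact Submodule.mem_sInf.mp (hv i) p hp
    have hsingle : ∀ m : Fin n, (Pi.single m 1 : Fin n → ℝ) ∈ W := by
      intro m
      by_cases hm : (m:ℕ) < n-1
      · exact hBW _ ⟨m, hm, rfl⟩
      · have hmval : (m:ℕ) = n-1 := by have := m.isLt; omega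
        set js₀ : Fin (k-1) → Fin n := fun i => ⟨(i:ℕ), by have := i.isLt; omega⟩ with hjs₀
        have hjinj : Function.Injective js₀ := by
          intro a b h
          exact Fin.ext (by simpa [hjs₀, Fin.ext_iff] using h)
        set w := tcontract (completeT n k) (fun i => (Pi.single (js₀ i) 1 : Fin n → ℝ)) with hw
        have hwW : w ∈ W := hclosed _ (fun i => hBW _
          ⟨js₀ i, by simp only [hjs₀]; have := i.isLt; omega, rfl⟩)
        set S : Finset (Fin n) :=
          Finset.univ.filter (fun j => (∀ t, js₀ t ≠ j) ∧ (j:ℕ) ≠ n-1) with hS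
        have hwp : ∀ p : Fin n, w p = completeT n k (consIdx p js₀) :=
          fun p => tcontract_single _ _ _
        have hsum : ∀ p : Fin n, (∑ j ∈ S, (Pi.single j 1 : Fin n → ℝ)) p
            = if p ∈ S then 1 else 0 := by
          intro p
          rw [Finset.sum_apply]
          simp only [Pi.single_apply]
          exact Finset.sum_ite_eq S p (fun _ => 1)
        have key : (Pi.single m 1 : Fin n → ℝ)
            = (Nat.factorial (k-1) : ℝ) • w - ∑ j ∈ S, (Pi.single j 1 : Fin n → ℝ) := by
          funext p
          rw [Pi.sub_apply, Pi.smul_apply, hsum, hwp, smul_eq_mul]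
          by_cases hp1 : (p:ℕ) < k-1
          · have hni : ¬ Function.Injective (consIdx p js₀) :=
              consIdx_not_inj hk p js₀ ⟨(p:ℕ), hp1⟩ rfl
            have hpm : p ≠ m := by
              intro h; rw [h] at hp1; omega
            have hpS : p ∉ S := by
              simp only [hS, Finset.mem_filter, Finset.mem_univ, true_and, not_and]
              intro h
              exact absurd rfl (h ⟨(p:ℕ), hp1⟩)
            rw [Pi.single_apply, if_neg hpm, if_neg hpS]
            simp [completeT, hni]
          · have hInj : Function.Injective (consIdx p js₀) :=
              consIdx_inj _ _ hjinj (fun t h => by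
                have := congrArg Fin.val h
                simp only [hjs₀] at this
                have := t.isLt
                omega)
            have hcv : completeT n k (consIdx p js₀) = ((Nat.factorial (k-1) : ℝ))⁻¹ := by
              simp [completeT, hInj]
            rw [hcv, mul_inv_cancel₀ hc]
            by_cases hp2 : (p:ℕ) = n-1
            · have hpm : p = m := Fin.ext (by omega)
              have hpS : p ∉ S := by
                simp only [hS, Finset.mem_filter, Finset.mem_univ, true_and, not_and]
                intro _
                simpa using hp2
              rw [Pi.single_apply, if_pos hpm, if_neg hpS]
              ring
            · have hpm : p ≠ m := by
                intro h; rw [h] at hp2; exact hp2 hmval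
              have hpS : p ∈ S := by
                simp only [hS, Finset.mem_filter, Finset.mem_univ, true_and]
                refine ⟨fun t h => ?_, hp2⟩
                have := congrArg Fin.val h
                simp only [hjs₀] at this
                have := t.isLt
                omega
              rw [Pi.single_apply, if_neg hpm, if_pos hpS]
              ring
        rw [key]
        exact sub_mem (Submodule.smul_mem _ _ hwW)
          (Submodule.sum_mem _ (fun j hj => by
            have hjlt : (j:ℕ) < n-1 := by
              have h2 := (Finset.mem_filter.mp hj).2.2
              have := j.isLt
              omega
            exact hBW _ ⟨j, hjlt, rfl⟩))
    apply top_unique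
    intro x _
    have hx : x = ∑ i, (Pi.single i (x i) : Fin n → ℝ) := (Finset.univ_sum_single x).symm
    rw [hx]
    refine Submodule.sum_mem _ (fun i _ => ?_)
    have : (Pi.single i (x i) : Fin n → ℝ) = x i • (Pi.single i 1 : Fin n → ℝ) := by
      rw [← Pi.single_smul]
      simp
    rw [this]
    exact Submodule.smul_mem _ _ (hsingle i)
end
end

section
/- Let G be a k-uniform hypergraph whose node set splits into two nonempty parts V₁ and V₂ with no hyperedge intersecting both (G is disconnected along this partition), and let A be its adjacency tensor. Then the coordinate subspaces ℝ^{V₁} × {0} and {0} × ℝ^{V₂} are each invariant under the closure operation v₁,…,v_{k−1} ↦ A v₁ ⋯ v_{k−1} together with span; consequently any controlling node set must intersect both V₁ and V₂, and 𝒞(A,B) = 𝒞(A, B₁) ⊕ 𝒞(A, B₂) when the columns of B are standard basis vectors split according to the partition. -/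
noncomputable section
open Classical

/-- Submodule of functions supported on `Q`. -/
def suppSub (n : ℕ) (Q : Fin n → Prop) : Submodule ℝ (Fin n → ℝ) where
  carrier := {f | ∀ x, ¬Q x → f x = 0}
  add_mem' := fun {a b} ha hb x hx => by simp [ha x hx, hb x hx]
  zero_mem' := fun x hx => rfl
  smul_mem' := fun c f hf x hx => by simp [hf x hx]

lemma mem_suppSub {n : ℕ} {Q : Fin n → Prop} {f : Fin n → ℝ} :
    f ∈ suppSub n Q ↔ ∀ x, ¬Q x → f x = 0 := Iff.rfl

lemma single_mem_suppSub {n : ℕ} {Q : Fin n → Prop} {s : Fin n} (hs : Q s) :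
    (Pi.single s 1 : Fin n → ℝ) ∈ suppSub n Q := by
  intro x hx
  have hxs : x ≠ s := fun h => hx (h ▸ hs)
  simp [Pi.single_eq_of_ne hxs]

lemma adjT_part {n k : ℕ} (hk : 2 ≤ k) (E : Finset (Finset (Fin n)))
    (P : Fin n → Prop)
    (hsplit : ∀ e ∈ E, (∀ i ∈ e, P i) ∨ (∀ i ∈ e, ¬P i))
    (x : Fin n) (js : Fin (k - 1) → Fin n)
    (hne : adjT n k E (consIdx x js) ≠ 0) :
    (P x ∧ ∀ i, P (js i)) ∨ (¬P x ∧ ∀ i, ¬P (js i)) := by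
  unfold adjT at hne
  by_cases h : Function.Injective (consIdx x js) ∧ Finset.image (consIdx x js) Finset.univ ∈ E
  · obtain ⟨hinj, hE⟩ := h
    have hmem : ∀ t : Fin k, consIdx x js t ∈ Finset.image (consIdx x js) Finset.univ :=
      fun t => Finset.mem_image_of_mem _ (Finset.mem_univ t)
    have hx0 : consIdx x js ⟨0, by omega⟩ = x := by simp [consIdx]
    have hjs : ∀ i : Fin (k - 1),
        consIdx x js ⟨(i : ℕ) + 1, by have := i.isLt; omega⟩ = js i := by
      intro i
      simp [consIdx]
    rcases hsplit _ hE with hall | hall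
    · left
      refine ⟨hx0 ▸ hall _ (hmem ⟨0, by omega⟩), fun i => ?_⟩
      exact (hjs i) ▸ hall _ (hmem ⟨(i : ℕ) + 1, by have := i.isLt; omega⟩)
    · right
      refine ⟨hx0 ▸ hall _ (hmem ⟨0, by omega⟩), fun i => ?_⟩
      exact (hjs i) ▸ hall _ (hmem ⟨(i : ℕ) + 1, by have := i.isLt; omega⟩)
  · simp [h] at hne

lemma tcontract_vanish {n k : ℕ} (hk : 2 ≤ k) (E : Finset (Finset (Fin n)))
    (P : Fin n → Prop)
    (hsplit : ∀ e ∈ E, (∀ i ∈ e, P i) ∨ (∀ i ∈ e, ¬P i))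
    (v : Fin (k - 1) → Fin n → ℝ) (hv : ∀ i, ∀ x, ¬P x → v i x = 0)
    (x : Fin n) (hx : ¬P x) : tcontract (adjT n k E) v x = 0 := by
  unfold tcontract
  apply Finset.sum_eq_zero
  intro js _
  by_cases hA : adjT n k E (consIdx x js) = 0
  · simp [hA]
  · rcases adjT_part hk E P hsplit x js hA with ⟨hPx, _⟩ | ⟨_, hall⟩
    · exact absurd hPx hx
    · have i0 : Fin (k - 1) := ⟨0, by omega⟩
      rw [Finset.prod_eq_zero (Finset.mem_univ i0) (hv i0 _ (hall i0)), mul_zero]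

lemma tcontract_mixed {n k : ℕ} (hk : 2 ≤ k) (E : Finset (Finset (Fin n)))
    (P : Fin n → Prop)
    (hsplit : ∀ e ∈ E, (∀ i ∈ e, P i) ∨ (∀ i ∈ e, ¬P i))
    (v : Fin (k - 1) → Fin n → ℝ) (i₀ j₀ : Fin (k - 1))
    (hv1 : ∀ x, ¬P x → v i₀ x = 0) (hv2 : ∀ x, P x → v j₀ x = 0) :
    tcontract (adjT n k E) v = 0 := by
  funext x
  apply Finset.sum_eq_zero
  intro js _
  by_cases hA : adjT n k E (consIdx x js) = 0
  · simp [hA]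
  · rcases adjT_part hk E P hsplit x js hA with ⟨_, hall⟩ | ⟨_, hall⟩
    · rw [Finset.prod_eq_zero (Finset.mem_univ j₀) (hv2 _ (hall j₀)), mul_zero]
    · rw [Finset.prod_eq_zero (Finset.mem_univ i₀) (hv1 _ (hall i₀)), mul_zero]

lemma subset_ctrlSpace {n k : ℕ} (A : (Fin k → Fin n) → ℝ) (Bc : Set (Fin n → ℝ)) :
    Bc ⊆ ↑(ctrlSpace A Bc) := by
  intro x hx
  simp only [SetLike.mem_coe, ctrlSpace, Submodule.mem_sInf]
  exact fun W hW => hW.1 hx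

lemma ctrlSpace_inv {n k : ℕ} (A : (Fin k → Fin n) → ℝ) (Bc : Set (Fin n → ℝ))
    (v : Fin (k - 1) → Fin n → ℝ) (hv : ∀ i, v i ∈ ctrlSpace A Bc) :
    tcontract A v ∈ ctrlSpace A Bc := by
  rw [ctrlSpace, Submodule.mem_sInf]
  intro W hW
  exact hW.2 v (fun i => (Submodule.mem_sInf.mp (hv i)) W hW)

lemma ctrlSpace_le {n k : ℕ} (A : (Fin k → Fin n) → ℝ) (Bc : Set (Fin n → ℝ))
    (W : Submodule ℝ (Fin n → ℝ)) (hB : Bc ⊆ ↑W)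
    (hinv : ∀ v : Fin (k - 1) → (Fin n → ℝ), (∀ i, v i ∈ W) → tcontract A v ∈ W) :
    ctrlSpace A Bc ≤ W := sInf_le ⟨hB, hinv⟩

lemma ctrlSpace_mono {n k : ℕ} (A : (Fin k → Fin n) → ℝ) {B1 B2 : Set (Fin n → ℝ)}
    (h : B1 ⊆ B2) : ctrlSpace A B1 ≤ ctrlSpace A B2 :=
  sInf_le_sInf (fun W hW => ⟨h.trans hW.1, hW.2⟩)

lemma tcontract_expand {n k : ℕ} (A : (Fin k → Fin n) → ℝ)
    (a b : Fin (k - 1) → Fin n → ℝ) :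
    tcontract A (fun i => a i + b i)
      = ∑ T ∈ Finset.univ.powerset,
          tcontract A (fun i => if i ∈ T then a i else b i) := by
  funext x
  simp only [tcontract, Finset.sum_apply]
  rw [Finset.sum_comm]
  apply Finset.sum_congr rfl
  intro js _
  rw [← Finset.mul_sum]
  congr 1
  simp only [Pi.add_apply]
  rw [Finset.prod_add]
  apply Finset.sum_congr rfl
  intro T hT
  have hite : ∀ x : Fin (k - 1), (if x ∈ T then a x else b x) (js x)
      = if x ∈ T then a x (js x) else b x (js x) := fun x => by split <;> rfl
  simp only [hite]
  rw [Finset.prod_ite, Finset.filter_mem_eq_inter, Finset.univ_inter,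
    Finset.filter_not, Finset.filter_mem_eq_inter, Finset.univ_inter]

/-- Suppose the node set of a `k`-uniform hypergraph (`k ≥ 2`) splits into two nonempty
parts (given by a predicate `P`) with no hyperedge meeting both parts. Then the two
coordinate subspaces supported on each part are invariant under the contraction map;
consequently any controlling node set meets both parts, and the controllability
subspace of a set `S` of control nodes is the (disjoint) direct sum of those of
`S ∩ V₁` and `S ∩ V₂`. -/
theorem stmt19 {n k : ℕ} (hk : 2 ≤ k) (E : Finset (Finset (Fin n)))
    (hunif : ∀ e ∈ E, e.card = k)
    (P : Fin n → Prop) [DecidablePred P]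
    (h1 : ∃ i, P i) (h2 : ∃ i, ¬P i)
    (hsplit : ∀ e ∈ E, (∀ i ∈ e, P i) ∨ (∀ i ∈ e, ¬P i)) :
    (∀ v : Fin (k - 1) → (Fin n → ℝ), (∀ i, ∀ x, ¬P x → v i x = 0) →
        ∀ x, ¬P x → tcontract (adjT n k E) v x = 0)
    ∧ (∀ v : Fin (k - 1) → (Fin n → ℝ), (∀ i, ∀ x, P x → v i x = 0) →
        ∀ x, P x → tcontract (adjT n k E) v x = 0)
    ∧ (∀ S : Finset (Fin n),
        ctrlSpace (adjT n k E) {x | ∃ s ∈ S, x = (Pi.single s 1 : Fin n → ℝ)} = ⊤ →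
          (∃ s ∈ S, P s) ∧ (∃ s ∈ S, ¬P s))
    ∧ (∀ S : Finset (Fin n),
        ctrlSpace (adjT n k E) {x | ∃ s ∈ S, x = (Pi.single s 1 : Fin n → ℝ)}
          = ctrlSpace (adjT n k E)
              {x | ∃ s ∈ S.filter (fun i => P i), x = (Pi.single s 1 : Fin n → ℝ)}
            ⊔ ctrlSpace (adjT n k E)
              {x | ∃ s ∈ S.filter (fun i => ¬P i), x = (Pi.single s 1 : Fin n → ℝ)}
        ∧ Disjoint
            (ctrlSpace (adjT n k E)
              {x | ∃ s ∈ S.filter (fun i => P i), x = (Pi.single s 1 : Fin n → ℝ)})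
            (ctrlSpace (adjT n k E)
              {x | ∃ s ∈ S.filter (fun i => ¬P i), x = (Pi.single s 1 : Fin n → ℝ)})) := by
  have hsplit' : ∀ e ∈ E, (∀ i ∈ e, ¬P i) ∨ (∀ i ∈ e, ¬¬P i) := by
    intro e he
    rcases hsplit e he with h | h
    · exact Or.inr fun i hi => not_not_intro (h i hi)
    · exact Or.inl h
  have part1 : ∀ v : Fin (k - 1) → (Fin n → ℝ), (∀ i, ∀ x, ¬P x → v i x = 0) →
      ∀ x, ¬P x → tcontract (adjT n k E) v x = 0 :=
    fun v hv x hx => tcontract_vanish hk E P hsplit v hv x hx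
  have part2 : ∀ v : Fin (k - 1) → (Fin n → ℝ), (∀ i, ∀ x, P x → v i x = 0) →
      ∀ x, P x → tcontract (adjT n k E) v x = 0 :=
    fun v hv x hx => tcontract_vanish hk E (fun y => ¬P y) hsplit' v
      (fun i x h => hv i x (not_not.mp h)) x (not_not_intro hx)
  -- invariance of the supported subspaces
  have hW1inv : ∀ v : Fin (k - 1) → (Fin n → ℝ), (∀ i, v i ∈ suppSub n P) →
      tcontract (adjT n k E) v ∈ suppSub n P :=
    fun v hv x hx => part1 v (fun i y hy => hv i y hy) x hx
  have hW2inv : ∀ v : Fin (k - 1) → (Fin n → ℝ), (∀ i, v i ∈ suppSub n (fun y => ¬P y)) →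
      tcontract (adjT n k E) v ∈ suppSub n (fun y => ¬P y) :=
    fun v hv x hx => part2 v (fun i y hy => hv i y (not_not_intro hy)) x (not_not.mp hx)
  have hC1W : ∀ S : Finset (Fin n),
      ctrlSpace (adjT n k E)
        {x | ∃ s ∈ S.filter (fun i => P i), x = (Pi.single s 1 : Fin n → ℝ)}
      ≤ suppSub n P := by
    intro S
    apply ctrlSpace_le _ _ _ _ hW1inv
    rintro x ⟨s, hs, rfl⟩
    exact single_mem_suppSub ((Finset.mem_filter.mp hs).2)
  have hC2W : ∀ S : Finset (Fin n),
      ctrlSpace (adjT n k E)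
        {x | ∃ s ∈ S.filter (fun i => ¬P i), x = (Pi.single s 1 : Fin n → ℝ)}
      ≤ suppSub n (fun y => ¬P y) := by
    intro S
    apply ctrlSpace_le _ _ _ _ hW2inv
    rintro x ⟨s, hs, rfl⟩
    exact single_mem_suppSub ((Finset.mem_filter.mp hs).2)
  refine ⟨part1, part2, ?_, ?_⟩
  · -- controlling sets meet both parts
    intro S htop
    constructor
    · by_contra h
      push_neg at h
      have hle : ctrlSpace (adjT n k E) {x | ∃ s ∈ S, x = (Pi.single s 1 : Fin n → ℝ)}
          ≤ suppSub n (fun y => ¬P y) := by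
        apply ctrlSpace_le _ _ _ _ hW2inv
        rintro x ⟨s, hs, rfl⟩
        exact single_mem_suppSub (h s hs)
      obtain ⟨i, hi⟩ := h1
      have : (Pi.single i 1 : Fin n → ℝ) ∈ suppSub n (fun y => ¬P y) :=
        hle (htop ▸ Submodule.mem_top)
      have h0 : (Pi.single i 1 : Fin n → ℝ) i = 0 := this i (not_not_intro hi)
      simp [Pi.single_eq_same] at h0
    · by_contra h
      push_neg at h
      have hle : ctrlSpace (adjT n k E) {x | ∃ s ∈ S, x = (Pi.single s 1 : Fin n → ℝ)}
          ≤ suppSub n P := by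
        apply ctrlSpace_le _ _ _ _ hW1inv
        rintro x ⟨s, hs, rfl⟩
        exact single_mem_suppSub (h s hs)
      obtain ⟨i, hi⟩ := h2
      have : (Pi.single i 1 : Fin n → ℝ) ∈ suppSub n P :=
        hle (htop ▸ Submodule.mem_top)
      have h0 : (Pi.single i 1 : Fin n → ℝ) i = 0 := this i hi
      simp [Pi.single_eq_same] at h0
  · -- decomposition
    intro S
    set C1 := ctrlSpace (adjT n k E)
      {x | ∃ s ∈ S.filter (fun i => P i), x = (Pi.single s 1 : Fin n → ℝ)} with hC1
    set C2 := ctrlSpace (adjT n k E)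
      {x | ∃ s ∈ S.filter (fun i => ¬P i), x = (Pi.single s 1 : Fin n → ℝ)} with hC2
    have hsupinv : ∀ v : Fin (k - 1) → (Fin n → ℝ), (∀ i, v i ∈ C1 ⊔ C2) →
        tcontract (adjT n k E) v ∈ C1 ⊔ C2 := by
      intro v hv
      choose a ha b hb hab using fun i => Submodule.mem_sup.mp (hv i)
      have hveq : v = fun i => a i + b i := funext fun i => (hab i).symm
      rw [hveq, tcontract_expand]
      apply Submodule.sum_mem
      intro T _
      by_cases hTu : T = Finset.univ
      · subst hTu
        simp only [Finset.mem_univ, if_true]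
        exact Submodule.mem_sup_left (ctrlSpace_inv _ _ a ha)
      by_cases hTe : T = ∅
      · subst hTe
        simp only [Finset.notMem_empty, if_false]
        exact Submodule.mem_sup_right (ctrlSpace_inv _ _ b hb)
      · obtain ⟨i₀, hi₀⟩ := Finset.nonempty_iff_ne_empty.mpr hTe
        obtain ⟨j₀, hj₀⟩ : ∃ j, j ∉ T := by
          by_contra hc
          push_neg at hc
          exact hTu (Finset.eq_univ_iff_forall.mpr hc)
        rw [tcontract_mixed hk E P hsplit _ i₀ j₀ ?_ ?_]
        · exact Submodule.zero_mem _
        · intro x hx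
          simp only [hi₀, if_true]
          exact hC1W S (ha i₀) x hx
        · intro x hx
          simp only [hj₀, if_false]
          exact hC2W S (hb j₀) x (not_not_intro hx)
    constructor
    · apply le_antisymm
      · apply ctrlSpace_le _ _ _ _ hsupinv
        rintro x ⟨s, hs, rfl⟩
        by_cases hPs : P s
        · exact Submodule.mem_sup_left
            (subset_ctrlSpace _ _ ⟨s, Finset.mem_filter.mpr ⟨hs, hPs⟩, rfl⟩)
        · exact Submodule.mem_sup_right
            (subset_ctrlSpace _ _ ⟨s, Finset.mem_filter.mpr ⟨hs, hPs⟩, rfl⟩)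
      · apply sup_le <;>
        · apply ctrlSpace_mono
          rintro x ⟨s, hs, rfl⟩
          exact ⟨s, (Finset.mem_filter.mp hs).1, rfl⟩
    · have hdisj : Disjoint (suppSub n P) (suppSub n (fun y => ¬P y)) := by
        rw [Submodule.disjoint_def]
        intro f hf1 hf2
        funext x
        by_cases hx : P x
        · exact hf2 x (not_not_intro hx)
        · exact hf1 x hx
      exact hdisj.mono (hC1W S) (hC2W S)
end
end
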